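/- Let τ be uniform on [T, 2T], σ₀ = 1/2 + 1/log T, and X ≥ 2 with X^{2k} ≤ T^{1/2}. For odd positive integers k, E[(Re Σ_{p ≤ X} p^{-(σ₀+iτ)})^k] = O(X^{2k}/T). -/

import Mathlib

open MeasureTheory Complex Finset

lemma integral_cos_mul_bound (a b ω : ℝ) (hω : ω ≠ 0) :
    |∫ t in a..b, Real.cos (t * ω)| ≤ 2 / |ω| := by
  rw [intervalIntegral.integral_comp_mul_right Real.cos hω, integral_cos,
    smul_eq_mul, abs_mul, abs_inv]
  rw [div_eq_inv_mul]
  gcongr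
  calc |Real.sin (b * ω) - Real.sin (a * ω)| ≤ |Real.sin (b*ω)| + |Real.sin (a*ω)| := abs_sub _ _
  _ ≤ 1 + 1 := add_le_add (abs_le.mpr ⟨Real.neg_one_le_sin _, Real.sin_le_one _⟩) (abs_le.mpr ⟨Real.neg_one_le_sin _, Real.sin_le_one _⟩)
  _ = 2 := by norm_num

lemma log_diff_ge' (a b : ℕ) (hb : 1 ≤ b) (hab : b < a) (M : ℝ)
    (haM : (a:ℝ) ≤ M) : 1 / M ≤ Real.log a - Real.log b := by
  have ha1 : 1 ≤ a := le_of_lt (lt_of_le_of_lt hb hab)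
  have ha0 : (0:ℝ) < a := by exact_mod_cast ha1
  have hb0 : (0:ℝ) < b := by exact_mod_cast hb
  have h1 : Real.log b - Real.log a ≤ (b:ℝ)/a - 1 := by
    have := Real.log_le_sub_one_of_pos (show (0:ℝ) < (b:ℝ)/a by positivity)
    rwa [Real.log_div (ne_of_gt hb0) (ne_of_gt ha0)] at this
  have hba : (b:ℝ) + 1 ≤ a := by exact_mod_cast hab
  have h2 : (1:ℝ)/a ≤ 1 - (b:ℝ)/a := by
    have e : 1 - (b:ℝ)/a = ((a:ℝ)-b)/a := by field_simp
    rw [e]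
    gcongr
    linarith
  have hM : 1/M ≤ 1/(a:ℝ) := one_div_le_one_div_of_le ha0 haM
  linarith

lemma log_diff_ge (a b : ℕ) (ha : 1 ≤ a) (hb : 1 ≤ b) (hab : a ≠ b) (M : ℝ)
    (haM : (a:ℝ) ≤ M) (hbM : (b:ℝ) ≤ M) : 1 / M ≤ |Real.log a - Real.log b| := by
  rcases lt_or_gt_of_ne hab with h | h
  · rw [abs_sub_comm]
    calc 1/M ≤ Real.log b - Real.log a := log_diff_ge' b a ha h M hbM
    _ ≤ |Real.log b - Real.log a| := le_abs_self _
  · calc 1/M ≤ Real.log a - Real.log b := log_diff_ge' a b hb h M haM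
    _ ≤ |Real.log a - Real.log b| := le_abs_self _

lemma prod_cos_eq (k : ℕ) (L : Fin k → ℝ) (t : ℝ) :
    ∏ i, Real.cos (t * L i) =
      (∑ S ∈ (univ : Finset (Fin k)).powerset,
        Real.cos (t * (∑ i ∈ S, L i - ∑ i ∈ univ \ S, L i))) / 2 ^ k := by
  have key : ((2:ℂ)) ^ k * ∏ i, (Real.cos (t * L i) : ℂ) =
      ∑ S ∈ (univ : Finset (Fin k)).powerset,
        Complex.exp ((t * (∑ i ∈ S, L i - ∑ i ∈ univ \ S, L i) : ℝ) * I) := by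
    have h2 : ((2:ℂ))^k * ∏ i, (Real.cos (t * L i) : ℂ)
        = ∏ i : Fin k, (Complex.exp ((t * L i : ℝ) * I) + Complex.exp (-((t * L i : ℝ) * I))) := by
      rw [show ((2:ℂ))^k = ∏ _i : Fin k, (2:ℂ) by simp, ← Finset.prod_mul_distrib]
      apply Finset.prod_congr rfl
      intro i _
      rw [show ((Real.cos (t * L i) : ℂ)) = Complex.cos ((t * L i : ℝ) : ℂ) by
        rw [Complex.ofReal_cos]]
      rw [Complex.two_cos, neg_mul]
    rw [h2, Finset.prod_add]
    apply Finset.sum_congr rfl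
    intro S _
    rw [← Complex.exp_sum, ← Complex.exp_sum, ← Complex.exp_add]
    congr 1
    push_cast
    have e1 : ∀ s : Finset (Fin k), ∑ x ∈ s, (t:ℂ) * (L x : ℂ) * I
        = (t:ℂ) * (∑ x ∈ s, (L x : ℂ)) * I := by
      intro s; rw [← Finset.sum_mul, ← Finset.mul_sum]
    have e2 : ∑ x ∈ univ \ S, -((t:ℂ) * (L x : ℂ) * I)
        = -((t:ℂ) * (∑ x ∈ univ \ S, (L x : ℂ)) * I) := by
      rw [Finset.sum_neg_distrib, e1]
    rw [e1, e2]
    ring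
  have key' : (((2:ℝ)^k * ∏ i, Real.cos (t * L i) : ℝ) : ℂ) =
      ∑ S ∈ (univ : Finset (Fin k)).powerset,
        Complex.exp ((t * (∑ i ∈ S, L i - ∑ i ∈ univ \ S, L i) : ℝ) * I) := by
    rw [← key]
    push_cast
    ring
  have keyre := congrArg Complex.re key'
  rw [Complex.ofReal_re, Complex.re_sum] at keyre
  simp only [Complex.exp_ofReal_mul_I_re] at keyre
  rw [eq_div_iff (by positivity : ((2:ℝ))^k ≠ 0), mul_comm, keyre]

lemma cardFactors_finset_prod {α : Type*} (s : Finset α) (x : α → ℕ)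
    (h : ∀ i ∈ s, (x i).Prime) : ArithmeticFunction.cardFactors (∏ i ∈ s, x i) = s.card := by
  induction s using Finset.cons_induction with
  | empty => simp
  | cons a s ha ih =>
    rw [Finset.prod_cons, ArithmeticFunction.cardFactors_mul
        (h a (Finset.mem_cons_self a s)).ne_zero
        (Finset.prod_ne_zero_iff.mpr fun i hi => (h i (Finset.mem_cons_of_mem hi)).ne_zero),
      ArithmeticFunction.cardFactors_apply_prime (h a (Finset.mem_cons_self a s)),
      ih fun i hi => h i (Finset.mem_cons_of_mem hi), Finset.card_cons, add_comm]

lemma prods_ne {k : ℕ} (hk : Odd k) (x : Fin k → ℕ) (hx : ∀ i, (x i).Prime)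
    (S : Finset (Fin k)) :
    ∏ i ∈ S, x i ≠ ∏ i ∈ univ \ S, x i := by
  intro h
  have h1 : ArithmeticFunction.cardFactors ((∏ i ∈ S, x i) * ∏ i ∈ univ \ S, x i) = k := by
    rw [mul_comm, Finset.prod_sdiff (Finset.subset_univ S),
      cardFactors_finset_prod univ x (fun i _ => hx i), Finset.card_univ, Fintype.card_fin]
  have hS0 : ∏ i ∈ S, x i ≠ 0 :=
    Finset.prod_ne_zero_iff.mpr fun i _ => (hx i).ne_zero
  rw [← h, ArithmeticFunction.cardFactors_mul hS0 hS0] at h1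
  have hev : Even k := h1 ▸ Even.add_self _
  exact (Nat.not_even_iff_odd.mpr hk) hev

lemma key_bound (T X : ℝ) (hX : 2 ≤ X) (k : ℕ) (hk : Odd k) (x : Fin k → ℕ)
    (hx : ∀ i, (x i).Prime) (hxX : ∀ i, (x i : ℝ) ≤ X) :
    |∫ t in T..(2*T), ∏ i, Real.cos (t * Real.log (x i))| ≤ 2 * X ^ k := by
  have hX1 : (1:ℝ) ≤ X := by linarith
  have hXk : (0:ℝ) < X ^ k := by positivity
  -- the frequencies
  set L : Fin k → ℝ := fun i => Real.log (x i) with hL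
  -- bound on each frequency gap
  have freq : ∀ S : Finset (Fin k), S ∈ (univ : Finset (Fin k)).powerset →
      1 / X ^ k ≤ |∑ i ∈ S, L i - ∑ i ∈ univ \ S, L i| := by
    intro S _
    have hprod : ∀ s : Finset (Fin k), ∑ i ∈ s, L i = Real.log ((∏ i ∈ s, x i : ℕ) : ℝ) := by
      intro s
      push_cast
      rw [Real.log_prod (fun i _ => by exact_mod_cast (hx i).ne_zero)]
    have hle : ∀ s : Finset (Fin k), ((∏ i ∈ s, x i : ℕ) : ℝ) ≤ X ^ k := by
      intro s
      push_cast
      calc ∏ i ∈ s, (x i : ℝ) ≤ ∏ i ∈ s, X :=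
            Finset.prod_le_prod (fun i _ => by positivity) (fun i _ => hxX i)
      _ = X ^ s.card := Finset.prod_const X
      _ ≤ X ^ k := pow_le_pow_right₀ hX1 (le_trans (Finset.card_le_card (subset_univ s))
            (by simp))
    have hone : ∀ s : Finset (Fin k), 1 ≤ ∏ i ∈ s, x i := by
      intro s
      exact Finset.one_le_prod' (fun i _ => (hx i).one_lt.le)
    rw [hprod S, hprod (univ \ S)]
    exact log_diff_ge _ _ (hone S) (hone (univ \ S)) (prods_ne hk x hx S) _ (hle S) (hle _)
  -- rewrite the integrand
  have hrw : (∫ t in T..(2*T), ∏ i, Real.cos (t * L i)) =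
      (∑ S ∈ (univ : Finset (Fin k)).powerset,
        ∫ t in T..(2*T), Real.cos (t * (∑ i ∈ S, L i - ∑ i ∈ univ \ S, L i))) / 2 ^ k := by
    simp only [prod_cos_eq]
    rw [intervalIntegral.integral_div, intervalIntegral.integral_finset_sum]
    intro S _
    exact (Continuous.intervalIntegrable (by continuity) _ _)
  rw [hrw, abs_div, abs_of_pos (show (0:ℝ) < 2^k by positivity), div_le_iff₀ (show (0:ℝ) < 2^k by positivity)]
  calc |∑ S ∈ (univ : Finset (Fin k)).powerset,
        ∫ t in T..(2*T), Real.cos (t * (∑ i ∈ S, L i - ∑ i ∈ univ \ S, L i))|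
      ≤ ∑ S ∈ (univ : Finset (Fin k)).powerset,
        |∫ t in T..(2*T), Real.cos (t * (∑ i ∈ S, L i - ∑ i ∈ univ \ S, L i))| :=
        Finset.abs_sum_le_sum_abs _ _
    _ ≤ ∑ S ∈ (univ : Finset (Fin k)).powerset, 2 * X ^ k := by
        apply Finset.sum_le_sum
        intro S hS
        have h1 := freq S hS
        have hω : (∑ i ∈ S, L i - ∑ i ∈ univ \ S, L i) ≠ 0 := by
          intro h0
          rw [h0, abs_zero] at h1
          have : (0:ℝ) < 1 / X ^ k := by positivity
          linarith
        calc |∫ t in T..(2*T), Real.cos (t * (∑ i ∈ S, L i - ∑ i ∈ univ \ S, L i))|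
            ≤ 2 / |∑ i ∈ S, L i - ∑ i ∈ univ \ S, L i| := integral_cos_mul_bound _ _ _ hω
          _ ≤ 2 / (1 / X ^ k) := by
              apply div_le_div_of_nonneg_left (by norm_num) (by positivity) h1
          _ = 2 * X ^ k := by field_simp
    _ = 2^k * (2 * X ^ k) := by
        rw [Finset.sum_const, Finset.card_powerset, Finset.card_univ, Fintype.card_fin]
        simp [mul_comm]
    _ = 2 * X ^ k * 2 ^ k := by ring

lemma re_prime_cpow (p : ℕ) (hp : p.Prime) (σ t : ℝ) :
    ((p : ℂ) ^ (-((σ : ℂ) + t * Complex.I))).re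
      = Real.exp (-(σ * Real.log p)) * Real.cos (t * Real.log p) := by
  have hp0 : (p:ℂ) ≠ 0 := by exact_mod_cast hp.ne_zero
  have hlog : Complex.log (p:ℂ) = ((Real.log p : ℝ) : ℂ) := by
    rw [show ((p:ℂ)) = ((p:ℝ):ℂ) by push_cast; ring,
      ← Complex.ofReal_log (by positivity : (0:ℝ) ≤ (p:ℝ))]
  rw [Complex.cpow_def_of_ne_zero hp0, hlog]
  simp only [Complex.exp_re, Complex.mul_re, Complex.mul_im, Complex.ofReal_re,
    Complex.ofReal_im, Complex.neg_re, Complex.neg_im, Complex.add_re, Complex.add_im,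
    Complex.mul_I_re, Complex.mul_I_im, hlog]
  ring_nf
  rw [Complex.I_re, Complex.I_im]
  rw [mul_one, mul_zero, sub_zero, Real.cos_neg]

/-- Odd moments of the real part of the prime Dirichlet polynomial are small:
for `τ` uniform on `[T, 2T]`, `σ₀ = 1/2 + 1/log T`, `X ≥ 2` with `X^{2k} ≤ √T` and `k` odd,
`E[(Re Σ_{p ≤ X} p^{-(σ₀+iτ)})^k] = O(X^{2k}/T)`. -/
theorem odd_moments_prime_sum :
    ∃ C > 0, ∀ T : ℝ, 2 ≤ T → ∀ X : ℝ, 2 ≤ X → ∀ k : ℕ, Odd k →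
      X ^ (2 * k) ≤ Real.sqrt T →
      |(1 / T) * ∫ t in T..(2 * T),
          ((∑ p ∈ Finset.filter Nat.Prime (Finset.range (⌊X⌋₊ + 1)),
            (p : ℂ) ^ (-(((1 / 2 + 1 / Real.log T : ℝ) : ℂ) + t * Complex.I))).re) ^ k|
        ≤ C * X ^ (2 * k) / T := by
  refine ⟨2, by norm_num, ?_⟩
  intro T hT X hX k hk _
  set σ : ℝ := 1 / 2 + 1 / Real.log T with hσ
  set P : Finset ℕ := Finset.filter Nat.Prime (Finset.range (⌊X⌋₊ + 1)) with hP
  have hT0 : (0:ℝ) < T := by linarith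
  have hσ0 : 0 ≤ σ := by
    have : 0 < Real.log T := Real.log_pos (by linarith)
    rw [hσ]; positivity
  have hXfloor : ((⌊X⌋₊ : ℕ) : ℝ) ≤ X := Nat.floor_le (by linarith)
  have hPmem : ∀ p ∈ P, p.Prime ∧ (p:ℝ) ≤ X := by
    intro p hp
    rw [hP, Finset.mem_filter, Finset.mem_range] at hp
    refine ⟨hp.2, ?_⟩
    have : p ≤ ⌊X⌋₊ := Nat.lt_succ_iff.mp hp.1
    calc (p:ℝ) ≤ (⌊X⌋₊:ℝ) := by exact_mod_cast this
    _ ≤ X := hXfloor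
  -- pointwise rewrite of the integrand
  have hpt : ∀ t : ℝ,
      ((∑ p ∈ P, (p : ℂ) ^ (-((σ : ℂ) + (t:ℂ) * Complex.I))).re) ^ k
        = ∑ y ∈ Fintype.piFinset (fun _ : Fin k => P),
            (∏ i, Real.exp (-(σ * Real.log (y i)))) * ∏ i, Real.cos (t * Real.log (y i)) := by
    intro t
    rw [Complex.re_sum]
    have h1 : ∑ p ∈ P, ((p : ℂ) ^ (-((σ : ℂ) + (t:ℂ) * Complex.I))).re
        = ∑ p ∈ P, Real.exp (-(σ * Real.log p)) * Real.cos (t * Real.log p) :=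
      Finset.sum_congr rfl fun p hp => re_prime_cpow p (hPmem p hp).1 σ t
    rw [h1, show (∑ p ∈ P, Real.exp (-(σ * Real.log p)) * Real.cos (t * Real.log p)) ^ k
        = ∏ _i : Fin k, ∑ p ∈ P, Real.exp (-(σ * Real.log p)) * Real.cos (t * Real.log p) by
      simp, Finset.prod_univ_sum]
    exact Finset.sum_congr rfl fun y _ => by rw [← Finset.prod_mul_distrib]
  -- swap integral and sum
  have hint : (∫ t in T..(2*T),
      ((∑ p ∈ P, (p : ℂ) ^ (-((σ : ℂ) + (t:ℂ) * Complex.I))).re) ^ k)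
      = ∑ y ∈ Fintype.piFinset (fun _ : Fin k => P),
          (∏ i, Real.exp (-(σ * Real.log (y i)))) *
            ∫ t in T..(2*T), ∏ i, Real.cos (t * Real.log (y i)) := by
    rw [intervalIntegral.integral_congr (g := fun t => ∑ y ∈ Fintype.piFinset (fun _ : Fin k => P),
          (∏ i, Real.exp (-(σ * Real.log (y i)))) * ∏ i, Real.cos (t * Real.log (y i)))
        (fun t _ => hpt t)]
    rw [intervalIntegral.integral_finset_sum]
    · exact Finset.sum_congr rfl fun y _ => intervalIntegral.integral_const_mul _ _
    · intro y _
      exact (Continuous.intervalIntegrable (by continuity) _ _)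
  -- bound
  have hbound : |∫ t in T..(2*T),
      ((∑ p ∈ P, (p : ℂ) ^ (-((σ : ℂ) + (t:ℂ) * Complex.I))).re) ^ k| ≤ 2 * X ^ (2*k) := by
    rw [hint]
    calc |∑ y ∈ Fintype.piFinset (fun _ : Fin k => P),
          (∏ i, Real.exp (-(σ * Real.log (y i)))) *
            ∫ t in T..(2*T), ∏ i, Real.cos (t * Real.log (y i))|
        ≤ ∑ y ∈ Fintype.piFinset (fun _ : Fin k => P),
          |(∏ i, Real.exp (-(σ * Real.log (y i)))) *
            ∫ t in T..(2*T), ∏ i, Real.cos (t * Real.log (y i))| :=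
          Finset.abs_sum_le_sum_abs _ _
      _ ≤ ∑ _y ∈ Fintype.piFinset (fun _ : Fin k => P), 2 * X ^ k := by
          apply Finset.sum_le_sum
          intro y hy
          have hyP : ∀ i, y i ∈ P := fun i => (Fintype.mem_piFinset.mp hy) i
          have hyprime : ∀ i, (y i).Prime := fun i => (hPmem _ (hyP i)).1
          have hyX : ∀ i, ((y i : ℕ):ℝ) ≤ X := fun i => (hPmem _ (hyP i)).2
          rw [abs_mul]
          have hc : |∏ i, Real.exp (-(σ * Real.log (y i)))| ≤ 1 := by
            rw [_root_.abs_of_nonneg (Finset.prod_nonneg fun i _ => (Real.exp_pos _).le)]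
            apply Finset.prod_le_one (fun i _ => (Real.exp_pos _).le)
            intro i _
            rw [Real.exp_le_one_iff]
            have hlog : 0 ≤ Real.log (y i) :=
              Real.log_nonneg (by exact_mod_cast (hyprime i).one_lt.le)
            have : 0 ≤ σ * Real.log (y i) := mul_nonneg hσ0 hlog
            linarith
          calc |∏ i, Real.exp (-(σ * Real.log (y i)))| *
                |∫ t in T..(2*T), ∏ i, Real.cos (t * Real.log (y i))|
              ≤ 1 * (2 * X ^ k) := by
                apply mul_le_mul hc (key_bound T X hX k hk y hyprime hyX) (abs_nonneg _)
                norm_num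
            _ = 2 * X ^ k := by ring
      _ ≤ X ^ k * (2 * X ^ k) := by
          rw [Finset.sum_const, nsmul_eq_mul]
          apply mul_le_mul_of_nonneg_right _ (by positivity)
          · rw [Fintype.card_piFinset]
            simp only [Finset.prod_const, Finset.card_univ, Fintype.card_fin]
            push_cast
            apply pow_le_pow_left₀ (by positivity)
            -- card P ≤ X
            have hsub : P ⊆ Finset.Icc 2 ⌊X⌋₊ := by
              intro p hp
              rw [Finset.mem_Icc]
              rw [hP, Finset.mem_filter, Finset.mem_range] at hp
              exact ⟨hp.2.two_le, Nat.lt_succ_iff.mp hp.1⟩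
            calc (P.card : ℝ) ≤ ((Finset.Icc 2 ⌊X⌋₊).card : ℝ) := by
                  exact_mod_cast Finset.card_le_card hsub
              _ ≤ (⌊X⌋₊ : ℝ) := by
                  rw [Nat.card_Icc]
                  have h2 : (⌊X⌋₊ + 1 - 2 : ℕ) ≤ ⌊X⌋₊ := by omega
                  exact_mod_cast h2
              _ ≤ X := hXfloor
      _ = 2 * X ^ (2*k) := by rw [show 2*k = k + k from two_mul k, pow_add]; ring
  rw [abs_mul, abs_of_pos (show (0:ℝ) < 1/T by positivity)]
  calc (1/T) * |∫ t in T..(2*T),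
      ((∑ p ∈ P, (p : ℂ) ^ (-((σ : ℂ) + (t:ℂ) * Complex.I))).re) ^ k|
      ≤ (1/T) * (2 * X ^ (2*k)) := by
        apply mul_le_mul_of_nonneg_left hbound (by positivity)
    _ = 2 * X ^ (2*k) / T := by ring
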